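/- Let ρ = t σ + (1−t) ω be a convex combination of density operators with t ∈ (0,1), and let c > 0. Then Tr[{ρ ≥ cI}(ρ − cI)] ≤ t·Tr[{σ ≥ cI}(σ − cI)] + (1−t)·Tr[{ω ≥ cI}(ω − cI)]. -/

import Mathlib

open Matrix Kronecker BigOperators
open scoped ComplexOrder

/-- Projection onto the nonnegative eigenspace of a Hermitian matrix
(junk value `0` if the matrix is not Hermitian). -/
noncomputable def posProj {n : Type*} [Fintype n] [DecidableEq n]
    (X : Matrix n n ℂ) : Matrix n n ℂ :=
  if hX : X.IsHermitian then
    (hX.eigenvectorUnitary : Matrix n n ℂ) *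
      Matrix.diagonal (fun i => if (0:ℝ) ≤ hX.eigenvalues i then (1:ℂ) else 0) *
      star (hX.eigenvectorUnitary : Matrix n n ℂ)
  else 0

/-- Functional calculus logarithm of a Hermitian matrix, with the convention `log 0 = 0`
(junk value `0` if the matrix is not Hermitian). -/
noncomputable def matLog {n : Type*} [Fintype n] [DecidableEq n]
    (M : Matrix n n ℂ) : Matrix n n ℂ :=
  if hM : M.IsHermitian then
    (hM.eigenvectorUnitary : Matrix n n ℂ) *
      Matrix.diagonal (fun i => (Real.log (hM.eigenvalues i) : ℂ)) *
      star (hM.eigenvectorUnitary : Matrix n n ℂ)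
  else 0

/-- von Neumann entropy `-Tr[M log M] = -∑ λᵢ log λᵢ` (convention `0 log 0 = 0`). -/
noncomputable def vNEntropy {n : Type*} [Fintype n] [DecidableEq n]
    (M : Matrix n n ℂ) : ℝ :=
  if hM : M.IsHermitian then -∑ i, hM.eigenvalues i * Real.log (hM.eigenvalues i) else 0

/-- A density operator: positive semidefinite with unit trace. -/
def IsDensityOp {n : Type*} [Fintype n] [DecidableEq n] (ρ : Matrix n n ℂ) : Prop :=
  ρ.PosSemidef ∧ ρ.trace = 1

/-- Partial trace over the first tensor factor. -/
noncomputable def traceA {a b : ℕ} (M : Matrix (Fin a × Fin b) (Fin a × Fin b) ℂ) :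
    Matrix (Fin b) (Fin b) ℂ :=
  Matrix.of fun j j' => ∑ i, M (i, j) (i, j')

/-- Partial trace over the second tensor factor. -/
noncomputable def traceB {a b : ℕ} (M : Matrix (Fin a × Fin b) (Fin a × Fin b) ℂ) :
    Matrix (Fin a) (Fin a) ℂ :=
  Matrix.of fun i i' => ∑ j, M (i, j) (i', j)

/-- `n`-fold tensor (Kronecker) power of a matrix. -/
noncomputable def tensorPow {d : ℕ} (ϑ : Matrix (Fin d) (Fin d) ℂ) (n : ℕ) :
    Matrix (Fin n → Fin d) (Fin n → Fin d) ℂ :=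
  Matrix.of fun f g => ∏ i, ϑ (f i) (g i)

section Aux
variable {n : Type*} [Fintype n] [DecidableEq n]

lemma posProj_posSemidef {X : Matrix n n ℂ} (hX : X.IsHermitian) :
    (posProj X).PosSemidef := by
  rw [posProj, dif_pos hX, Matrix.star_eq_conjTranspose]
  exact (Matrix.posSemidef_diagonal_iff.mpr (fun i => by positivity)).mul_mul_conjTranspose_same _

lemma one_sub_posProj_posSemidef {X : Matrix n n ℂ} (hX : X.IsHermitian) :
    ((1 : Matrix n n ℂ) - posProj X).PosSemidef := by
  rw [posProj, dif_pos hX]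
  set U : Matrix n n ℂ := (hX.eigenvectorUnitary : Matrix n n ℂ) with hU
  have hUU : U * star U = 1 := (Matrix.mem_unitaryGroup_iff).mp hX.eigenvectorUnitary.2
  have : (1 : Matrix n n ℂ) - U * Matrix.diagonal (fun i => if (0:ℝ) ≤ hX.eigenvalues i then (1:ℂ) else 0) * star U
      = U * Matrix.diagonal (fun i => if (0:ℝ) ≤ hX.eigenvalues i then (0:ℂ) else 1) * star U := by
    conv_lhs => rw [← hUU]
    rw [show (U * star U) - U * Matrix.diagonal (fun i => if (0:ℝ) ≤ hX.eigenvalues i then (1:ℂ) else 0) * star U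
        = U * ((1 : Matrix n n ℂ) - Matrix.diagonal (fun i => if (0:ℝ) ≤ hX.eigenvalues i then (1:ℂ) else 0)) * star U by
      rw [Matrix.mul_sub, Matrix.mul_one, Matrix.sub_mul]]
    refine congrArg (fun D => U * D * star U) ?_
    ext i j
    by_cases h : (0:ℝ) ≤ hX.eigenvalues i <;>
      simp [Matrix.one_apply, Matrix.diagonal_apply, h]
  rw [this, Matrix.star_eq_conjTranspose]
  refine (Matrix.posSemidef_diagonal_iff.mpr (fun i => ?_)).mul_mul_conjTranspose_same _
  by_cases h : (0:ℝ) ≤ hX.eigenvalues i <;> simp [h]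

lemma posProj_mul_eq {X : Matrix n n ℂ} (hX : X.IsHermitian) :
    posProj X * X = (hX.eigenvectorUnitary : Matrix n n ℂ) *
      Matrix.diagonal (fun i => if (0:ℝ) ≤ hX.eigenvalues i then ((hX.eigenvalues i : ℝ) : ℂ) else 0) *
      star (hX.eigenvectorUnitary : Matrix n n ℂ) := by
  set U : Matrix n n ℂ := (hX.eigenvectorUnitary : Matrix n n ℂ) with hU
  set Q : Matrix n n ℂ := Matrix.diagonal (fun i => if (0:ℝ) ≤ hX.eigenvalues i then (1:ℂ) else 0) with hQ
  have hUU : star U * U = 1 := (Matrix.mem_unitaryGroup_iff').mp hX.eigenvectorUnitary.2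
  have h2 : posProj X * X = U * Q * star U * (U * Matrix.diagonal (RCLike.ofReal ∘ hX.eigenvalues) * star U) := by
    rw [posProj, dif_pos hX]
    congr 1
    exact hX.spectral_theorem
  rw [h2, show U * Q * star U * (U * Matrix.diagonal (RCLike.ofReal ∘ hX.eigenvalues) * star U)
      = U * (Q * (star U * U) * Matrix.diagonal (RCLike.ofReal ∘ hX.eigenvalues)) * star U by
    simp only [Matrix.mul_assoc]]
  rw [hUU, Matrix.mul_one, hQ, Matrix.diagonal_mul_diagonal]
  refine congrArg (fun D => U * D * star U) (congrArg Matrix.diagonal (funext fun i => ?_))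
  by_cases h : (0:ℝ) ≤ hX.eigenvalues i <;> simp [h]

lemma posProj_mul_posSemidef {X : Matrix n n ℂ} (hX : X.IsHermitian) :
    (posProj X * X).PosSemidef := by
  rw [posProj_mul_eq hX, Matrix.star_eq_conjTranspose]
  refine (Matrix.posSemidef_diagonal_iff.mpr (fun i => ?_)).mul_mul_conjTranspose_same _
  by_cases h : (0:ℝ) ≤ hX.eigenvalues i
  · simp only [h, if_true]
    exact Complex.zero_le_real.mpr h
  · simp [h]

lemma posProj_mul_sub_posSemidef {X : Matrix n n ℂ} (hX : X.IsHermitian) :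
    (posProj X * X - X).PosSemidef := by
  set U : Matrix n n ℂ := (hX.eigenvectorUnitary : Matrix n n ℂ) with hU
  have h2 : posProj X * X - X = U *
      Matrix.diagonal (fun i => if (0:ℝ) ≤ hX.eigenvalues i then ((hX.eigenvalues i : ℝ) : ℂ) else 0) * star U
      - U * Matrix.diagonal (RCLike.ofReal ∘ hX.eigenvalues) * star U := by
    rw [posProj_mul_eq hX]
    congr 1
    exact hX.spectral_theorem
  have h3 : posProj X * X - X = U *
      Matrix.diagonal (fun i => if (0:ℝ) ≤ hX.eigenvalues i then (0:ℂ) else ((-hX.eigenvalues i : ℝ) : ℂ)) * star U := by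
    rw [h2, show U * Matrix.diagonal (fun i => if (0:ℝ) ≤ hX.eigenvalues i then ((hX.eigenvalues i : ℝ) : ℂ) else 0) * star U
        - U * Matrix.diagonal (RCLike.ofReal ∘ hX.eigenvalues) * star U
        = U * (Matrix.diagonal (fun i => if (0:ℝ) ≤ hX.eigenvalues i then ((hX.eigenvalues i : ℝ) : ℂ) else 0)
          - Matrix.diagonal (RCLike.ofReal ∘ hX.eigenvalues)) * star U by
      simp only [Matrix.mul_sub, Matrix.sub_mul]]
    rw [Matrix.diagonal_sub]
    refine congrArg (fun D => U * D * star U) (congrArg Matrix.diagonal (funext fun i => ?_))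
    by_cases h : (0:ℝ) ≤ hX.eigenvalues i <;> simp [h]
  rw [h3, Matrix.star_eq_conjTranspose]
  refine (Matrix.posSemidef_diagonal_iff.mpr (fun i => ?_)).mul_mul_conjTranspose_same _
  by_cases h : (0:ℝ) ≤ hX.eigenvalues i
  · simp [h]
  · simp only [h, if_false]
    exact Complex.zero_le_real.mpr (by linarith [lt_of_not_ge h])

lemma trace_re_nonneg_of_posSemidef {M : Matrix n n ℂ} (hM : M.PosSemidef) :
    0 ≤ (M.trace).re := by
  have hd : ∀ i, 0 ≤ (M i i).re := by
    intro i
    exact (Complex.le_def.mp hM.diag_nonneg).1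
  rw [Matrix.trace]
  calc (0:ℝ) = ∑ _i : n, 0 := by simp
  _ ≤ ∑ i, (M.diag i).re := Finset.sum_le_sum fun i _ => hd i
  _ = (∑ i, M.diag i).re := by rw [Complex.re_sum]

open scoped MatrixOrder in
lemma trace_mul_re_nonneg {A B : Matrix n n ℂ} (hA : A.PosSemidef) (hB : B.PosSemidef) :
    0 ≤ ((A * B).trace).re := by
  obtain ⟨C, rfl⟩ := CStarAlgebra.nonneg_iff_eq_star_mul_self.mp hA.nonneg
  rw [Matrix.mul_assoc, Matrix.trace_mul_comm]
  exact trace_re_nonneg_of_posSemidef (hB.mul_mul_conjTranspose_same C)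

lemma trace_proj_le {A P : Matrix n n ℂ} (hA : A.IsHermitian)
    (hP : P.PosSemidef) (hP1 : ((1 : Matrix n n ℂ) - P).PosSemidef) :
    ((P * A).trace).re ≤ ((posProj A * A).trace).re := by
  have h1 : 0 ≤ ((P * (posProj A * A - A)).trace).re :=
    trace_mul_re_nonneg hP (posProj_mul_sub_posSemidef hA)
  have h2 : 0 ≤ ((((1 : Matrix n n ℂ) - P) * (posProj A * A)).trace).re :=
    trace_mul_re_nonneg hP1 (posProj_mul_posSemidef hA)
  rw [Matrix.mul_sub, Matrix.trace_sub, Complex.sub_re] at h1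
  rw [Matrix.sub_mul, Matrix.one_mul, Matrix.trace_sub, Complex.sub_re] at h2
  linarith

end Aux

theorem mixed_source_upper_bound {d : ℕ} (σ ω ρ : Matrix (Fin d) (Fin d) ℂ)
    (hσ : IsDensityOp σ) (hω : IsDensityOp ω)
    (t c : ℝ) (ht0 : 0 < t) (ht1 : t < 1) (hc : 0 < c)
    (hρ : ρ = (t : ℂ) • σ + (((1 - t) : ℝ) : ℂ) • ω) :
    ((posProj (ρ - (c:ℂ) • 1) * (ρ - (c:ℂ) • 1)).trace).re
      ≤ t * ((posProj (σ - (c:ℂ) • 1) * (σ - (c:ℂ) • 1)).trace).re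
        + (1 - t) * ((posProj (ω - (c:ℂ) • 1) * (ω - (c:ℂ) • 1)).trace).re := by
  have hσH := hσ.1.1
  have hωH := hω.1.1
  have hc1 : ((c:ℂ) • (1 : Matrix (Fin d) (Fin d) ℂ)).IsHermitian := by
    simp [Matrix.IsHermitian, Matrix.conjTranspose_smul, Complex.star_def, Complex.conj_ofReal]
  have hρH : ρ.IsHermitian := by
    rw [hρ]
    simp only [Matrix.IsHermitian, Matrix.conjTranspose_add, Matrix.conjTranspose_smul,
      Complex.star_def, Complex.conj_ofReal, hσH.eq, hωH.eq]
  have hAρ : (ρ - (c:ℂ) • 1).IsHermitian := hρH.sub hc1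
  have hAσ : (σ - (c:ℂ) • 1).IsHermitian := hσH.sub hc1
  have hAω : (ω - (c:ℂ) • 1).IsHermitian := hωH.sub hc1
  set P : Matrix (Fin d) (Fin d) ℂ := posProj (ρ - (c:ℂ) • 1) with hPdef
  have hP : P.PosSemidef := posProj_posSemidef hAρ
  have hP1 : ((1 : Matrix (Fin d) (Fin d) ℂ) - P).PosSemidef := one_sub_posProj_posSemidef hAρ
  have hsum : (t:ℂ) + (((1 - t):ℝ):ℂ) = 1 := by push_cast; ring
  have hdec : ρ - (c:ℂ) • 1 = (t:ℂ) • (σ - (c:ℂ) • 1) + (((1 - t):ℝ):ℂ) • (ω - (c:ℂ) • 1) := by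
    rw [hρ, smul_sub, smul_sub, sub_add_sub_comm, ← add_smul, hsum, one_smul]
  have htr : ((P * (ρ - (c:ℂ) • 1)).trace).re
      = t * ((P * (σ - (c:ℂ) • 1)).trace).re + (1 - t) * ((P * (ω - (c:ℂ) • 1)).trace).re := by
    rw [hdec, Matrix.mul_add, Matrix.mul_smul, Matrix.mul_smul, Matrix.trace_add,
      Matrix.trace_smul, Matrix.trace_smul, Complex.add_re]
    simp only [smul_eq_mul, Complex.re_ofReal_mul]
  rw [htr]
  have h1 := trace_proj_le hAσ hP hP1
  have h2 := trace_proj_le hAω hP hP1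
  have ht1' : (0:ℝ) ≤ 1 - t := by linarith
  gcongr <;> assumption
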